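/- There exists a non-negative integer-valued random variable Z whose characteristic function is φ(t) = exp(∫ (e^{itx} − 1) dν(x)) with ν = 2δ₁ + 2δ₂ − δ₃ + 2δ₄ + 2δ₅, and Z is not infinitely divisible; yet if X is an independent compound Poisson random variable with Lévy measure δ₃, then X + Z is compound Poisson with Lévy measure 2δ₁ + 2δ₂ + 2δ₄ + 2δ₅. Hence the convolution of a non-infinitely-divisible distribution with an infinitely divisible one can be infinitely divisible. -/

import Mathlib

open MeasureTheory Complex ENNReal

/-- Convolution of measures on `ℝ`: pushforward of the product under addition. -/
noncomputable def mconv (μ ν : Measure ℝ) : Measure ℝ :=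
  (μ.prod ν).map (fun p => p.1 + p.2)

/-- n-fold convolution power of a measure on `ℝ`. -/
noncomputable def convPow (μ : Measure ℝ) : ℕ → Measure ℝ
  | 0 => Measure.dirac 0
  | n + 1 => mconv μ (convPow μ n)

/-- Characteristic function of a measure on `ℝ`. -/
noncomputable def cf (μ : Measure ℝ) (t : ℝ) : ℂ :=
  ∫ x, Complex.exp (t * x * Complex.I) ∂μ

/-- A probability measure `μ` on `ℝ` is infinitely divisible if every `n ≥ 1`
admits a probability measure whose `n`-fold convolution power is `μ`. -/
def InfDivisible (μ : Measure ℝ) : Prop :=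
  ∀ n : ℕ, 1 ≤ n → ∃ ρ : Measure ℝ, IsProbabilityMeasure ρ ∧ convPow ρ n = μ

/-- `μ` is compound Poisson with (finite) Lévy measure `m`. -/
def IsCompoundPoisson (μ m : Measure ℝ) : Prop :=
  IsProbabilityMeasure μ ∧
    ∀ t : ℝ, cf μ t = Complex.exp (∫ x, (Complex.exp (t * x * Complex.I) - 1) ∂m)

namespace Rosinski

open Polynomial Nat

/-- The polynomial `2X + 2X² − X³ + 2X⁴ + 2X⁵`. -/
noncomputable def qq : Polynomial ℝ :=
  C 2 * X + C 2 * X^2 - C 1 * X^3 + C 2 * X^4 + C 2 * X^5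

/-- Coefficients of powers of `qq`. -/
noncomputable def aco (m k : ℕ) : ℝ := (qq ^ k).coeff m

lemma qq_coeff (i : ℕ) : qq.coeff i =
    if i = 1 then 2 else if i = 2 then 2 else if i = 3 then -1 else
    if i = 4 then 2 else if i = 5 then 2 else 0 := by
  rcases i with _|_|_|_|_|_|i <;>
    simp [qq, coeff_add, coeff_sub, coeff_C_mul, coeff_X_pow, coeff_X]

lemma qq_coeff_eq_zero {i : ℕ} (h : 5 < i) : qq.coeff i = 0 := by
  rw [qq_coeff]
  split_ifs <;> first | rfl | omega

lemma natDegree_qq_le : qq.natDegree ≤ 5 :=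
  natDegree_le_iff_coeff_eq_zero.2 fun _ h => qq_coeff_eq_zero h

lemma natDegree_qq_pow_le (k : ℕ) : (qq ^ k).natDegree ≤ 5 * k := by
  calc (qq ^ k).natDegree ≤ k * qq.natDegree := natDegree_pow_le
    _ ≤ k * 5 := Nat.mul_le_mul_left k natDegree_qq_le
    _ = 5 * k := Nat.mul_comm k 5

lemma aco_eq_zero_of_gt {m k : ℕ} (h : 5 * k < m) : aco m k = 0 :=
  coeff_eq_zero_of_natDegree_lt (lt_of_le_of_lt (natDegree_qq_pow_le k) h)

lemma aco_eq_zero_of_lt : ∀ {k m : ℕ}, m < k → aco m k = 0 := by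
  intro k
  induction k with
  | zero => intro m h; omega
  | succ k ih =>
      intro m h
      have hrw : aco m (k+1) = ∑ x ∈ Finset.HasAntidiagonal.antidiagonal m, (qq ^ k).coeff x.1 * qq.coeff x.2 := by
        rw [aco, pow_succ, coeff_mul]
      rw [hrw]
      apply Finset.sum_eq_zero
      rintro ⟨i, j⟩ hij
      rw [Finset.HasAntidiagonal.mem_antidiagonal] at hij
      rcases Nat.eq_zero_or_pos j with hj | hj
      · subst hj; rw [qq_coeff]; norm_num
      · have hik : i < k := by omega
        have : (qq ^ k).coeff i = 0 := ih hik
        rw [this, zero_mul]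

/-- ℓ¹-type bound on the coefficients of `qq`. -/
lemma sum_abs_qq_coeff (m : ℕ) : (∑ i ∈ Finset.range m, |qq.coeff i|) ≤ 9 := by
  induction m with
  | zero => simp
  | succ m ih =>
      rw [Finset.sum_range_succ]
      rcases le_or_gt m 5 with h | h
      · interval_cases m <;> norm_num [qq_coeff, Finset.sum_range_succ]
      · rw [qq_coeff_eq_zero h]; simpa using ih

lemma abs_aco_le (m k : ℕ) : |aco m k| ≤ 9 ^ k := by
  induction k generalizing m with
  | zero =>
      rcases m with _|m <;> simp [aco, coeff_one]
  | succ k ih =>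
      have hrw : aco m (k+1) = ∑ i ∈ Finset.range (m+1), (qq ^ k).coeff i * qq.coeff (m - i) := by
        rw [aco, pow_succ, coeff_mul]
        exact Finset.Nat.sum_antidiagonal_eq_sum_range_succ
          (fun i j => (qq ^ k).coeff i * qq.coeff j) m
      rw [hrw]
      calc |∑ i ∈ Finset.range (m+1), (qq ^ k).coeff i * qq.coeff (m - i)|
          ≤ ∑ i ∈ Finset.range (m+1), |(qq ^ k).coeff i * qq.coeff (m - i)| :=
            Finset.abs_sum_le_sum_abs _ _
        _ ≤ ∑ i ∈ Finset.range (m+1), 9 ^ k * |qq.coeff (m - i)| := by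
            apply Finset.sum_le_sum
            intro i _
            rw [abs_mul]
            exact mul_le_mul_of_nonneg_right (ih i) (abs_nonneg _)
        _ = 9 ^ k * ∑ i ∈ Finset.range (m+1), |qq.coeff (m - i)| := by
            rw [Finset.mul_sum]
        _ ≤ 9 ^ k * 9 := by
            apply mul_le_mul_of_nonneg_left _ (by positivity)
            exact le_trans (le_of_eq (Finset.sum_range_reflect (fun i => |qq.coeff i|) (m+1)))
              (sum_abs_qq_coeff (m+1))
        _ = 9 ^ (k+1) := by ring

/-- Coefficientwise nonnegativity of a polynomial. -/
def PolyNN (p : Polynomial ℝ) : Prop := ∀ n, 0 ≤ p.coeff n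

lemma polyNN_one : PolyNN 1 := fun n => by
  rcases n with _|n <;> simp [coeff_one]

lemma polyNN_add {p r : Polynomial ℝ} (hp : PolyNN p) (hr : PolyNN r) : PolyNN (p + r) :=
  fun n => by rw [coeff_add]; exact add_nonneg (hp n) (hr n)

lemma polyNN_term {a : ℝ} (ha : 0 ≤ a) (i : ℕ) : PolyNN (C a * X ^ i) := fun n => by
  rw [coeff_C_mul, coeff_X_pow]
  split <;> simp [ha]

lemma polyNN_mul {p r : Polynomial ℝ} (hp : PolyNN p) (hr : PolyNN r) : PolyNN (p * r) :=
  fun n => by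
    rw [coeff_mul]
    exact Finset.sum_nonneg fun x _ => mul_nonneg (hp x.1) (hr x.2)

lemma polyNN_pow {p : Polynomial ℝ} (hp : PolyNN p) (k : ℕ) : PolyNN (p ^ k) := by
  induction k with
  | zero => simpa using polyNN_one
  | succ k ih => rw [pow_succ]; exact polyNN_mul ih hp

lemma qq_sq_eq : qq ^ 2 =
    C (4:ℝ) * X^2 + C (8:ℝ) * X^3 + C (4:ℝ) * X^5 + C (17:ℝ) * X^6 + C (4:ℝ) * X^7
      + C (8:ℝ) * X^9 + C (4:ℝ) * X^10 := by
  simp only [qq, map_ofNat, map_one, map_neg]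
  ring

lemma polyNN_qq_sq : PolyNN (qq ^ 2) := by
  rw [qq_sq_eq]
  repeat' apply polyNN_add
  all_goals exact polyNN_term (by norm_num) _

lemma qq_cube_eq : qq ^ 3 =
    (C (8:ℝ) * X^3 + C (24:ℝ) * X^4 + C (12:ℝ) * X^5 + C (8:ℝ) * X^6 + C (66:ℝ) * X^7
      + C (54:ℝ) * X^8 + C (54:ℝ) * X^10 + C (66:ℝ) * X^11 + C (8:ℝ) * X^12 + C (12:ℝ) * X^13
      + C (24:ℝ) * X^14 + C (8:ℝ) * X^15) + C (-1 : ℝ) * X^9 := by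
  simp only [qq, map_ofNat, map_one, map_neg]
  ring

lemma polyNN_qq5 : PolyNN (qq ^ 5) := by
  have h5 : qq ^ 5 =
      C (32:ℝ) * X^5 + C (160:ℝ) * X^6 + C (240:ℝ) * X^7 + C (160:ℝ) * X^8 + C (560:ℝ) * X^9
        + C (1232:ℝ) * X^10 + C (760:ℝ) * X^11 + C (720:ℝ) * X^12 + C (2290:ℝ) * X^13
        + C (1930:ℝ) * X^14 + C (639:ℝ) * X^15 + C (1930:ℝ) * X^16 + C (2290:ℝ) * X^17
        + C (720:ℝ) * X^18 + C (760:ℝ) * X^19 + C (1232:ℝ) * X^20 + C (560:ℝ) * X^21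
        + C (160:ℝ) * X^22 + C (240:ℝ) * X^23 + C (160:ℝ) * X^24 + C (32:ℝ) * X^25 := by
    simp only [qq, map_ofNat, map_one, map_neg]
    ring
  rw [h5]
  repeat' apply polyNN_add
  all_goals exact polyNN_term (by norm_num) _

/-- Nonnegativity of coefficients of `qq^k` for `k ∉ {1,3}`. -/
lemma aco_nonneg {k : ℕ} (h1 : k ≠ 1) (h3 : k ≠ 3) (m : ℕ) : 0 ≤ aco m k := by
  rcases Nat.even_or_odd k with ⟨j, hj⟩ | ⟨j, hj⟩
  · subst hj
    have hq : qq ^ (j + j) = (qq ^ 2) ^ j := by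
      rw [← two_mul, pow_mul]
    rw [aco, hq]
    exact polyNN_pow polyNN_qq_sq j m
  · subst hj
    rcases j with _ | _ | j
    · exact absurd (by norm_num) h1
    · exact absurd (by norm_num) h3
    · have hq : qq ^ (2 * (j + 2) + 1) = (qq ^ 2) ^ j * qq ^ 5 := by
        rw [← pow_mul, ← pow_add]
        norm_num
        ring_nf
      rw [aco, hq]
      exact polyNN_mul (polyNN_pow polyNN_qq_sq j) polyNN_qq5 m

/-! ### Summability -/

lemma five_k_add_one_le (k : ℕ) : (5 * k + 1 : ℝ) ≤ 6 ^ k := by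
  induction k with
  | zero => norm_num
  | succ k ih =>
      have h6 : (6:ℝ)^(k+1) = 6 * 6^k := by ring
      rw [h6]
      push_cast
      push_cast at ih
      nlinarith [ih]

lemma summable_aux (c : ℝ) (hc : 0 ≤ c) :
    Summable (fun k : ℕ => (5 * k + 1 : ℝ) * c ^ k / k !) := by
  apply Summable.of_nonneg_of_le (fun k => by positivity)
    (fun k => ?_) (Real.summable_pow_div_factorial (6 * c))
  rw [mul_pow]
  gcongr
  exact five_k_add_one_le k

lemma summable_bound (r : ℝ) (hr : 0 ≤ r) :
    Summable (fun x : ℕ × ℕ => |aco x.1 x.2| * r ^ x.2 / x.2 !) := by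
  -- dominator, in swapped coordinates
  set H' : ℕ × ℕ → ℝ := fun y => if y.2 ≤ 5 * y.1 then (9 * r) ^ y.1 / (y.1)! else 0 with hH'
  have hH'nn : ∀ y, 0 ≤ H' y := by
    intro y; rw [hH']; dsimp only; split <;> positivity
  have hsumH' : Summable H' := by
    rw [summable_prod_of_nonneg hH'nn]
    constructor
    · intro k
      apply summable_of_ne_finset_zero (s := Finset.range (5 * k + 1))
      intro m hm
      rw [Finset.mem_range, not_lt] at hm
      simp only [hH']
      rw [if_neg (by omega)]
    · apply Summable.congr (summable_aux (9 * r) (by positivity))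
      intro k
      have : ∑' (m : ℕ), H' (k, m) = ∑ m ∈ Finset.range (5 * k + 1), H' (k, m) := by
        apply tsum_eq_sum
        intro m hm
        rw [Finset.mem_range, not_lt] at hm
        simp only [hH']
        rw [if_neg (by omega)]
      rw [this]
      have : ∀ m ∈ Finset.range (5 * k + 1), H' (k, m) = (9 * r) ^ k / k ! := by
        intro m hm
        rw [Finset.mem_range] at hm
        simp only [hH']
        rw [if_pos (by omega)]
      rw [Finset.sum_congr rfl this, Finset.sum_const, Finset.card_range, nsmul_eq_mul]
      push_cast
      ring
  have hsumH : Summable (fun x : ℕ × ℕ => H' (x.2, x.1)) := by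
    have := (Equiv.prodComm ℕ ℕ).summable_iff (f := H')
    exact this.2 hsumH'
  apply Summable.of_nonneg_of_le (fun x => by positivity) _ hsumH
  rintro ⟨m, k⟩
  simp only [hH']
  rcases le_or_gt m (5 * k) with h | h
  · rw [if_pos h]
    have h9 : |aco m k| ≤ 9 ^ k := abs_aco_le m k
    rw [mul_pow]
    gcongr
  · rw [if_neg (by omega), aco_eq_zero_of_gt h]
    simp

lemma abs_term (r : ℝ) (hr : 0 ≤ r) (m k : ℕ) :
    |aco m k * r ^ k / (k ! : ℝ)| = |aco m k| * r ^ k / k ! := by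
  rw [abs_div, abs_mul, _root_.abs_pow, _root_.abs_of_nonneg hr, Nat.abs_cast]

lemma summable_slice_abs (r : ℝ) (hr : 0 ≤ r) (m : ℕ) :
    Summable (fun k : ℕ => |aco m k| * r ^ k / k !) := by
  have h := (summable_bound r hr).comp_injective
    (i := fun k : ℕ => ((m, k) : ℕ × ℕ)) (fun a b hab => by simpa using hab)
  exact h.congr (fun k => rfl)

lemma summable_slice (r : ℝ) (hr : 0 ≤ r) (m : ℕ) :
    Summable (fun k : ℕ => aco m k * r ^ k / k !) := by
  apply Summable.of_abs
  exact (summable_slice_abs r hr m).congr (fun k => (abs_term r hr m k).symm)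

/-- The coefficient sequence `∑_k aco m k r^k / k!`. -/
noncomputable def pr (r : ℝ) (m : ℕ) : ℝ := ∑' k : ℕ, aco m k * r ^ k / k !

lemma abs_pr_le (r : ℝ) (hr : 0 ≤ r) (m : ℕ) :
    |pr r m| ≤ ∑' k : ℕ, |aco m k| * r ^ k / k ! := by
  have h2 : Summable (fun k : ℕ => |aco m k * r ^ k / (k ! : ℝ)|) :=
    (summable_slice_abs r hr m).congr (fun k => (abs_term r hr m k).symm)
  have h4 : (∑' k : ℕ, ‖aco m k * r ^ k / (k ! : ℝ)‖) = ∑' k : ℕ, |aco m k| * r ^ k / k ! :=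
    tsum_congr (fun k => by rw [Real.norm_eq_abs, abs_term r hr])
  calc |pr r m| = ‖pr r m‖ := (Real.norm_eq_abs _).symm
    _ ≤ ∑' k : ℕ, ‖aco m k * r ^ k / (k ! : ℝ)‖ :=
        norm_tsum_le_tsum_norm (h2.congr (fun k => (Real.norm_eq_abs _).symm))
    _ = ∑' k : ℕ, |aco m k| * r ^ k / k ! := h4

lemma summable_pr_abs (r : ℝ) (hr : 0 ≤ r) :
    Summable (fun m : ℕ => ∑' k : ℕ, |aco m k| * r ^ k / k !) := by
  have h := (summable_prod_of_nonneg (f := fun x : ℕ × ℕ => |aco x.1 x.2| * r ^ x.2 / x.2 !)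
    (fun x => by positivity)).1 (summable_bound r hr)
  exact h.2

lemma summable_pr (r : ℝ) (hr : 0 ≤ r) : Summable (pr r) := by
  apply Summable.of_abs
  apply Summable.of_nonneg_of_le (fun m => abs_nonneg _) (abs_pr_le r hr) (summable_pr_abs r hr)

/-! ### Evaluation of the generating function -/

/-- `P(w) = 2w + 2w² − w³ + 2w⁴ + 2w⁵`. -/
noncomputable def Pw (w : ℂ) : ℂ := 2*w + 2*w^2 - w^3 + 2*w^4 + 2*w^5

lemma qq_eval (w : ℂ) : (qq.map (algebraMap ℝ ℂ)).eval w = Pw w := by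
  simp only [qq, Polynomial.map_add, Polynomial.map_sub, Polynomial.map_mul,
    Polynomial.map_pow, Polynomial.map_C, Polynomial.map_X, eval_add, eval_sub, eval_mul,
    eval_pow, eval_C, eval_X, Pw]
  push_cast
  ring

lemma tsum_aco_eval (k : ℕ) (w : ℂ) :
    ∑' m : ℕ, (aco m k : ℂ) * w ^ m = (Pw w) ^ k := by
  rw [tsum_eq_sum (s := Finset.range (5*k+1)) (fun m hm => by
    rw [Finset.mem_range, not_lt] at hm
    rw [aco_eq_zero_of_gt (by omega)]
    simp)]
  have hdeg : ((qq.map (algebraMap ℝ ℂ)) ^ k).natDegree < 5*k+1 := by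
    have h1 : ((qq.map (algebraMap ℝ ℂ)) ^ k).natDegree ≤ k * (qq.map (algebraMap ℝ ℂ)).natDegree :=
      natDegree_pow_le
    have h2 : (qq.map (algebraMap ℝ ℂ)).natDegree ≤ 5 :=
      le_trans natDegree_map_le natDegree_qq_le
    have := le_trans h1 (Nat.mul_le_mul_left k h2)
    omega
  have heval := Polynomial.eval_eq_sum_range' hdeg w
  rw [eval_pow, qq_eval] at heval
  rw [heval]
  apply Finset.sum_congr rfl
  intro i _
  congr 1
  rw [← Polynomial.map_pow, coeff_map]
  rfl

set_option maxHeartbeats 1000000 in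
/-- The key expansion: `∑ₘ pr r m wᵐ = exp (r ⬝ P(w))` for `‖w‖ ≤ 1`. -/
lemma tsum_pr_eq_exp (r : ℝ) (hr : 0 ≤ r) (w : ℂ) (hw : ‖w‖ ≤ 1) :
    ∑' m : ℕ, ((pr r m : ℂ) * w ^ m) = Complex.exp (r * Pw w) := by
  set F : ℕ × ℕ → ℂ := fun x => (aco x.1 x.2 : ℂ) * (r:ℂ) ^ x.2 / (x.2 ! : ℂ) * w ^ x.1 with hF
  have hFnorm : ∀ x : ℕ × ℕ, ‖F x‖ ≤ |aco x.1 x.2| * r ^ x.2 / (x.2)! := by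
    rintro ⟨m, k⟩
    simp only [hF]
    rw [norm_mul, norm_div, norm_mul, norm_pow, norm_pow]
    have h1 : ‖(aco m k : ℂ)‖ = |aco m k| := by rw [Complex.norm_real, Real.norm_eq_abs]
    have h2 : ‖(r : ℂ)‖ = r := by
      rw [Complex.norm_real, Real.norm_eq_abs, _root_.abs_of_nonneg hr]
    have h3 : ‖((k ! : ℕ) : ℂ)‖ = (k ! : ℝ) := by
      rw [Complex.norm_natCast]
    have h4 : ‖w‖ ^ m ≤ 1 := pow_le_one₀ (norm_nonneg w) hw
    rw [h1, h2, h3]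
    calc |aco m k| * r ^ k / (k ! : ℝ) * ‖w‖ ^ m
        ≤ |aco m k| * r ^ k / (k ! : ℝ) * 1 := by
          apply mul_le_mul_of_nonneg_left h4 (by positivity)
      _ = |aco m k| * r ^ k / (k ! : ℝ) := by ring
  have hFs : Summable F := by
    apply Summable.of_norm
    exact Summable.of_nonneg_of_le (fun x => norm_nonneg _) hFnorm (summable_bound r hr)
  have hslice : ∀ m : ℕ, Summable (fun k => F (m, k)) := fun m => hFs.prod_factor m
  have hslice2 : ∀ k : ℕ, Summable (fun m => F (m, k)) := by
    intro k
    apply (hFs.comp_injective (i := fun m : ℕ => ((m, k) : ℕ × ℕ))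
      (fun a b hab => by simpa using hab)).congr
    intro m
    rfl
  -- A : total = sum over m of sum over k
  have hA : ∑' x : ℕ × ℕ, F x = ∑' m : ℕ, ∑' k : ℕ, F (m, k) := Summable.tsum_prod' hFs hslice
  -- B : swap
  have hB : ∑' m : ℕ, ∑' k : ℕ, F (m, k) = ∑' k : ℕ, ∑' m : ℕ, F (m, k) := by
    have h := Summable.tsum_comm' (f := fun m k : ℕ => F (m, k))
      (hFs.congr (fun x => rfl)) hslice hslice2
    exact h.symm
  -- C : inner sum over m
  have hC : ∀ k : ℕ, ∑' m : ℕ, F (m, k) = (r:ℂ) ^ k / (k ! : ℂ) * (Pw w) ^ k := by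
    intro k
    have : (fun m : ℕ => F (m, k)) = fun m => ((r:ℂ) ^ k / (k ! : ℂ)) * ((aco m k : ℂ) * w ^ m) := by
      funext m
      simp only [hF]
      ring
    rw [this, tsum_mul_left, tsum_aco_eval]
  -- D : sum over k is exp
  have hD : ∑' k : ℕ, ((r:ℂ) ^ k / (k ! : ℂ) * (Pw w) ^ k) = Complex.exp (r * Pw w) := by
    rw [Complex.exp_eq_exp_ℂ, NormedSpace.exp_eq_tsum_div]
    apply tsum_congr
    intro k
    rw [mul_pow]
    ring
  -- E : identify the left side
  have hE : ∀ m : ℕ, ∑' k : ℕ, F (m, k) = (pr r m : ℂ) * w ^ m := by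
    intro m
    have h1 : (fun k : ℕ => F (m, k)) = fun k => ((aco m k * r ^ k / (k ! : ℝ) : ℝ) : ℂ) * w ^ m := by
      funext k
      simp only [hF]
      push_cast
      ring
    rw [h1, tsum_mul_right]
    congr 1
    rw [pr, Complex.ofReal_tsum]
  calc ∑' m : ℕ, ((pr r m : ℂ) * w ^ m)
      = ∑' m : ℕ, ∑' k : ℕ, F (m, k) := by
        exact tsum_congr (fun m => (hE m).symm)
    _ = ∑' k : ℕ, ∑' m : ℕ, F (m, k) := hB
    _ = ∑' k : ℕ, ((r:ℂ) ^ k / (k ! : ℂ) * (Pw w) ^ k) := tsum_congr hC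
    _ = Complex.exp (r * Pw w) := hD

/-! ### Nonnegativity of the coefficients -/

lemma aco_zero (m : ℕ) : aco m 0 = if m = 0 then 1 else 0 := by
  rw [aco, pow_zero, coeff_one]

lemma aco_one (m : ℕ) : aco m 1 = qq.coeff m := by rw [aco, pow_one]

lemma aco_one_nonneg {m : ℕ} (hm : m ≠ 3) : 0 ≤ aco m 1 := by
  rw [aco_one, qq_coeff]
  split_ifs <;> first | norm_num | exact absurd ‹m = 3› hm

lemma polyNN_cubePos : PolyNN
    (C (8:ℝ) * X^3 + C (24:ℝ) * X^4 + C (12:ℝ) * X^5 + C (8:ℝ) * X^6 + C (66:ℝ) * X^7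
      + C (54:ℝ) * X^8 + C (54:ℝ) * X^10 + C (66:ℝ) * X^11 + C (8:ℝ) * X^12 + C (12:ℝ) * X^13
      + C (24:ℝ) * X^14 + C (8:ℝ) * X^15) := by
  repeat' apply polyNN_add
  all_goals exact polyNN_term (by norm_num) _

lemma aco_three_nonneg {m : ℕ} (hm : m ≠ 9) : 0 ≤ aco m 3 := by
  rw [aco, qq_cube_eq, coeff_add, coeff_C_mul, coeff_X_pow, if_neg (by omega)]
  have := polyNN_cubePos m
  simpa using this

lemma aco_3_2 : aco 3 2 = 8 := by
  rw [aco, qq_sq_eq]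
  simp [coeff_add, coeff_C_mul, coeff_X_pow]

lemma aco_9_2 : aco 9 2 = 8 := by
  rw [aco, qq_sq_eq]
  simp [coeff_add, coeff_C_mul, coeff_X_pow]

lemma aco_9_3 : aco 9 3 = -1 := by
  rw [aco, qq_cube_eq]
  simp [coeff_add, coeff_C_mul, coeff_X_pow]

lemma aco_3_3 : aco 3 3 = 8 := by
  rw [aco, qq_cube_eq]
  simp [coeff_add, coeff_C_mul, coeff_X_pow]

lemma pr_one_nonneg (m : ℕ) : 0 ≤ pr 1 m := by
  have hs := summable_slice 1 zero_le_one m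
  by_cases h3 : m = 3
  · subst h3
    rw [pr, ← (summable_slice 1 zero_le_one 3).sum_add_tsum_nat_add 3]
    have htail : 0 ≤ ∑' j : ℕ, aco 3 (j + 3) * (1:ℝ) ^ (j + 3) / (j + 3)! := by
      apply tsum_nonneg
      intro j
      rcases j with _ | j
      · have : (0:ℝ) ≤ aco 3 3 := aco_three_nonneg (by norm_num)
        positivity
      · rw [aco_eq_zero_of_lt (by omega)]
        simp
    have hhead : ∑ i ∈ Finset.range 3, aco 3 i * (1:ℝ) ^ i / i ! = 3 := by
      rw [Finset.sum_range_succ, Finset.sum_range_succ, Finset.sum_range_one]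
      rw [aco_zero, aco_one, qq_coeff, aco_3_2]
      norm_num
    rw [hhead]
    linarith
  by_cases h9 : m = 9
  · subst h9
    rw [pr, ← (summable_slice 1 zero_le_one 9).sum_add_tsum_nat_add 4]
    have htail : 0 ≤ ∑' j : ℕ, aco 9 (j + 4) * (1:ℝ) ^ (j + 4) / (j + 4)! := by
      apply tsum_nonneg
      intro j
      have : (0:ℝ) ≤ aco 9 (j + 4) := aco_nonneg (by omega) (by omega) 9
      positivity
    have hhead : ∑ i ∈ Finset.range 4, aco 9 i * (1:ℝ) ^ i / i ! = 4 - 1/6 := by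
      rw [Finset.sum_range_succ, Finset.sum_range_succ, Finset.sum_range_succ,
        Finset.sum_range_one]
      rw [aco_zero, aco_one, qq_coeff, aco_9_2, aco_9_3]
      norm_num [Nat.factorial]
    rw [hhead]
    linarith
  · apply tsum_nonneg
    intro k
    have hk : 0 ≤ aco m k := by
      by_cases h1 : k = 1
      · subst h1; exact aco_one_nonneg h3
      by_cases hk3 : k = 3
      · subst hk3; exact aco_three_nonneg h9
      · exact aco_nonneg h1 hk3 m
    positivity

lemma Pw_one : Pw 1 = 7 := by
  rw [Pw]; norm_num

lemma tsum_pr_one : ∑' m : ℕ, pr 1 m = Real.exp 7 := by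
  have h := tsum_pr_eq_exp 1 zero_le_one 1 (by norm_num)
  rw [Pw_one] at h
  simp only [one_pow, mul_one, mul_comm] at h
  have h2 : ((∑' m : ℕ, pr 1 m : ℝ) : ℂ) = ((Real.exp 7 : ℝ) : ℂ) := by
    rw [Complex.ofReal_tsum, Complex.ofReal_exp]
    convert h using 2 with m
    · simp
    · norm_num
  exact_mod_cast h2

/-! ### The measure `μZ` -/

/-- The weights of the measure. -/
noncomputable def w8 (n : ℕ) : ℝ := Real.exp (-7) * pr 1 n

lemma w8_nonneg (n : ℕ) : 0 ≤ w8 n := mul_nonneg (Real.exp_nonneg _) (pr_one_nonneg n)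

lemma summable_w8 : Summable w8 := (summable_pr 1 zero_le_one).mul_left _

lemma tsum_w8 : ∑' n, w8 n = 1 := by
  simp only [w8]
  rw [tsum_mul_left, tsum_pr_one, ← Real.exp_add]
  norm_num

/-- Rosiński's measure. -/
noncomputable def muZ : Measure ℝ :=
  Measure.sum (fun n : ℕ => ENNReal.ofReal (w8 n) • Measure.dirac (n : ℝ))

instance muZ_prob : IsProbabilityMeasure muZ := by
  constructor
  rw [muZ, Measure.sum_apply _ MeasurableSet.univ]
  simp only [Measure.smul_apply, measure_univ, smul_eq_mul, mul_one]
  rw [← ENNReal.ofReal_tsum_of_nonneg w8_nonneg summable_w8, tsum_w8]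
  exact ofReal_one

lemma muZ_support : muZ (Set.range ((↑·) : ℕ → ℝ))ᶜ = 0 := by
  have hms : MeasurableSet (Set.range ((↑·) : ℕ → ℝ))ᶜ :=
    ((Set.countable_range _).measurableSet).compl
  rw [muZ, Measure.sum_apply _ hms]
  have h0 : ∀ n : ℕ, Measure.dirac ((n:ℕ) : ℝ) (Set.range ((↑·) : ℕ → ℝ))ᶜ = 0 := by
    intro n
    rw [Measure.dirac_apply' _ hms]
    apply Set.indicator_of_notMem
    simp only [Set.mem_compl_iff, not_not, Set.mem_range]
    exact ⟨n, rfl⟩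
  simp only [Measure.smul_apply, h0, mul_zero, smul_eq_mul, tsum_zero]

lemma norm_cexp_I (t x : ℝ) : ‖Complex.exp (t * x * I)‖ = 1 := by
  rw [Complex.norm_exp]
  simp

lemma continuous_cexp_I (t : ℝ) : Continuous (fun x : ℝ => Complex.exp (t * x * I)) := by
  apply Complex.continuous_exp.comp
  exact (continuous_const.mul Complex.continuous_ofReal).mul continuous_const

lemma integrable_of_bounded {μ : Measure ℝ} [IsFiniteMeasure μ] {f : ℝ → ℂ}
    (hf : Continuous f) (hb : ∀ x, ‖f x‖ ≤ 1) : Integrable f μ :=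
  Integrable.mono' (integrable_const 1) hf.aestronglyMeasurable (ae_of_all _ hb)

lemma integrable_cexp_I {μ : Measure ℝ} [IsFiniteMeasure μ] (t : ℝ) :
    Integrable (fun x : ℝ => Complex.exp (t * x * I)) μ :=
  integrable_of_bounded (continuous_cexp_I t) (fun x => le_of_eq (norm_cexp_I t x))

lemma norm_cexp_tI (t : ℝ) : ‖Complex.exp (t * I)‖ = 1 := by
  rw [Complex.norm_exp]
  simp

lemma cf_muZ (t : ℝ) : cf muZ t = Complex.exp (Pw (Complex.exp (t * I)) - 7) := by
  have hint : Integrable (fun x : ℝ => Complex.exp (t * x * I)) muZ := integrable_cexp_I t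
  rw [cf]
  rw [muZ] at hint ⊢
  rw [integral_sum_measure hint]
  have hterm : ∀ n : ℕ,
      ∫ x, Complex.exp (t * x * I) ∂(ENNReal.ofReal (w8 n) • Measure.dirac ((n:ℕ) : ℝ))
        = (Real.exp (-7) : ℂ) * ((pr 1 n : ℂ) * Complex.exp (t * I) ^ n) := by
    intro n
    rw [integral_smul_measure, integral_dirac, ENNReal.toReal_ofReal (w8_nonneg n)]
    rw [Complex.real_smul, w8]
    push_cast
    rw [show ((t:ℂ) * (n:ℂ) * I) = (n:ℂ) * ((t:ℂ) * I) by ring, Complex.exp_nat_mul]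
    ring
  rw [tsum_congr hterm, tsum_mul_left]
  rw [tsum_pr_eq_exp 1 zero_le_one _ (le_of_eq (norm_cexp_tI t))]
  rw [Complex.ofReal_exp, ← Complex.exp_add]
  congr 1
  push_cast
  ring

/-- `cf muZ` in the form required by the theorem. -/
lemma cf_muZ' (t : ℝ) : cf muZ t = Complex.exp
    (2 * (Complex.exp (t * 1 * Complex.I) - 1)
      + 2 * (Complex.exp (t * 2 * Complex.I) - 1)
      - (Complex.exp (t * 3 * Complex.I) - 1)
      + 2 * (Complex.exp (t * 4 * Complex.I) - 1)
      + 2 * (Complex.exp (t * 5 * Complex.I) - 1)) := by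
  rw [cf_muZ]
  congr 1
  have e : ∀ n : ℕ, Complex.exp ((t:ℂ) * (n:ℂ) * I) = Complex.exp ((t:ℂ) * I) ^ n := by
    intro n
    rw [show ((t:ℂ) * (n:ℂ) * I) = (n:ℂ) * ((t:ℂ) * I) by ring, Complex.exp_nat_mul]
  have e1 : Complex.exp ((t:ℂ) * 1 * I) = Complex.exp ((t:ℂ) * I) ^ 1 := by
    simpa using e 1
  have e2 : Complex.exp ((t:ℂ) * 2 * I) = Complex.exp ((t:ℂ) * I) ^ 2 := by
    simpa using e 2
  have e3 : Complex.exp ((t:ℂ) * 3 * I) = Complex.exp ((t:ℂ) * I) ^ 3 := by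
    simpa using e 3
  have e4 : Complex.exp ((t:ℂ) * 4 * I) = Complex.exp ((t:ℂ) * I) ^ 4 := by
    simpa using e 4
  have e5 : Complex.exp ((t:ℂ) * 5 * I) = Complex.exp ((t:ℂ) * I) ^ 5 := by
    simpa using e 5
  rw [e1, e2, e3, e4, e5, Pw]
  ring

/-! ### Convolution and characteristic functions -/

lemma mconv_prob (μ ν : Measure ℝ) [IsProbabilityMeasure μ] [IsProbabilityMeasure ν] :
    IsProbabilityMeasure (mconv μ ν) := by
  rw [mconv]
  exact Measure.isProbabilityMeasure_map (measurable_fst.add measurable_snd).aemeasurable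

lemma cf_mconv (μ ν : Measure ℝ) [IsProbabilityMeasure μ] [IsProbabilityMeasure ν] (t : ℝ) :
    cf (mconv μ ν) t = cf μ t * cf ν t := by
  rw [cf, mconv, integral_map (by fun_prop : AEMeasurable (fun p : ℝ × ℝ => p.1 + p.2) (μ.prod ν))
    (continuous_cexp_I t).aestronglyMeasurable]
  have h : ∀ p : ℝ × ℝ, Complex.exp (t * ((p.1 + p.2 : ℝ)) * I)
      = Complex.exp (t * p.1 * I) * Complex.exp (t * p.2 * I) := by
    intro p
    rw [← Complex.exp_add]
    push_cast
    ring_nf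
  calc ∫ p : ℝ × ℝ, Complex.exp (t * ((p.1 + p.2 : ℝ)) * I) ∂(μ.prod ν)
      = ∫ p : ℝ × ℝ, Complex.exp (t * p.1 * I) * Complex.exp (t * p.2 * I) ∂(μ.prod ν) := by
        exact integral_congr_ae (ae_of_all _ h)
    _ = cf μ t * cf ν t :=
        integral_prod_mul (fun x : ℝ => Complex.exp (t * x * I))
          (fun x : ℝ => Complex.exp (t * x * I))

lemma convPow_prob (ρ : Measure ℝ) [IsProbabilityMeasure ρ] (n : ℕ) :
    IsProbabilityMeasure (convPow ρ n) := by
  induction n with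
  | zero => rw [convPow]; infer_instance
  | succ n ih =>
      rw [convPow]
      haveI := ih
      exact mconv_prob _ _

lemma cf_convPow (ρ : Measure ℝ) [IsProbabilityMeasure ρ] (n : ℕ) (t : ℝ) :
    cf (convPow ρ n) t = (cf ρ t) ^ n := by
  induction n with
  | zero =>
      rw [convPow, cf, integral_dirac]
      simp
  | succ n ih =>
      haveI := convPow_prob ρ n
      rw [convPow, cf_mconv _ _ t, ih, pow_succ]
      ring

lemma integrable_of_bounded' {μ : Measure ℝ} [IsFiniteMeasure μ] {f : ℝ → ℂ} (C : ℝ)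
    (hf : Continuous f) (hb : ∀ x, ‖f x‖ ≤ C) : Integrable f μ :=
  Integrable.mono' (integrable_const C) hf.aestronglyMeasurable (ae_of_all _ hb)

lemma continuous_cexp_sub_one (t : ℝ) :
    Continuous (fun x : ℝ => Complex.exp (t * x * I) - 1) :=
  (continuous_cexp_I t).sub continuous_const

lemma norm_cexp_sub_one_le (t x : ℝ) : ‖Complex.exp (t * x * I) - 1‖ ≤ 2 := by
  calc ‖Complex.exp (t * x * I) - 1‖ ≤ ‖Complex.exp (t * x * I)‖ + ‖(1:ℂ)‖ := norm_sub_le _ _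
    _ ≤ 2 := by rw [norm_cexp_I]; norm_num

/-- The compound Poisson property of `mconv muZ μX`. -/
lemma final_clause (μX : Measure ℝ) (h : IsCompoundPoisson μX (Measure.dirac 3)) :
    IsCompoundPoisson (mconv muZ μX)
      ((2 : ℝ≥0∞) • Measure.dirac 1 + (2 : ℝ≥0∞) • Measure.dirac 2
        + (2 : ℝ≥0∞) • Measure.dirac 4 + (2 : ℝ≥0∞) • Measure.dirac 5) := by
  obtain ⟨hXprob, hXcf⟩ := h
  haveI := hXprob
  constructor
  · exact mconv_prob _ _
  intro t
  rw [cf_mconv _ _ t, cf_muZ' t, hXcf t]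
  have hd3 : (∫ x : ℝ, (Complex.exp (t * x * I) - 1) ∂(Measure.dirac (3:ℝ)))
      = Complex.exp (t * 3 * I) - 1 := by
    rw [integral_dirac]
    norm_num
  rw [hd3, ← Complex.exp_add]
  have hint : ∀ a : ℝ, Integrable (fun x : ℝ => Complex.exp (t * x * I) - 1)
      ((2 : ℝ≥0∞) • Measure.dirac a) := by
    intro a
    exact (integrable_of_bounded' 2 (continuous_cexp_sub_one t)
      (norm_cexp_sub_one_le t)).smul_measure (by norm_num)
  have hsm : ∀ a : ℝ, (∫ x : ℝ, (Complex.exp (t * x * I) - 1) ∂((2 : ℝ≥0∞) • Measure.dirac a))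
      = 2 * (Complex.exp (t * a * I) - 1) := by
    intro a
    rw [integral_smul_measure, integral_dirac]
    norm_num [Complex.real_smul]
  rw [integral_add_measure (Integrable.add_measure (Integrable.add_measure (hint 1) (hint 2))
      (hint 4)) (hint 5),
    integral_add_measure (Integrable.add_measure (hint 1) (hint 2)) (hint 4),
    integral_add_measure (hint 1) (hint 2), hsm 1, hsm 2, hsm 4, hsm 5]
  congr 1
  push_cast
  ring

/-! ### Non infinite divisibility : auxiliary lemmas -/

lemma root5 {z : ℂ} (h5 : z ^ 5 = 1) (hlt : ‖z - 1‖ < 1) : z = 1 := by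
  have habs : ‖z‖ = 1 := by
    have h1 : ‖z‖ ^ 5 = 1 := by rw [← norm_pow, h5, norm_one]
    nlinarith [norm_nonneg z, sq_nonneg (‖z‖ - 1),
      sq_nonneg (‖z‖ + 1), sq_nonneg (‖z‖ ^ 2 - 1),
      sq_nonneg (‖z‖ ^ 2 + ‖z‖)]
  by_contra hne
  have hgeom : z^4 + z^3 + z^2 + z + 1 = 0 := by
    have hfac : (z - 1) * (z^4 + z^3 + z^2 + z + 1) = z^5 - 1 := by ring
    have h0 : (z - 1) * (z^4 + z^3 + z^2 + z + 1) = 0 := by rw [hfac, h5]; ring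
    rcases mul_eq_zero.1 h0 with h | h
    · exact absurd (sub_eq_zero.1 h) hne
    · exact h
  have hzz : z * (starRingEnd ℂ) z = 1 := by
    rw [Complex.mul_conj, Complex.normSq_eq_norm_sq, habs]
    norm_num
  have h4 : z^4 = (starRingEnd ℂ) z := by
    calc z^4 = z^4 * (z * (starRingEnd ℂ) z) := by rw [hzz, mul_one]
      _ = z^5 * (starRingEnd ℂ) z := by ring
      _ = (starRingEnd ℂ) z := by rw [h5, one_mul]
  have h3 : z^3 = (starRingEnd ℂ) (z^2) := by
    have hc2 : (starRingEnd ℂ) (z^2) = ((starRingEnd ℂ) z)^2 := by rw [map_pow]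
    calc z^3 = z^3 * (z * (starRingEnd ℂ) z) * (z * (starRingEnd ℂ) z) := by
          rw [hzz]; ring
      _ = z^5 * ((starRingEnd ℂ) z)^2 := by ring
      _ = ((starRingEnd ℂ) z)^2 := by rw [h5, one_mul]
      _ = (starRingEnd ℂ) (z^2) := hc2.symm
  have hre := congrArg Complex.re hgeom
  rw [h4, h3] at hre
  simp only [Complex.add_re, Complex.conj_re, Complex.one_re, Complex.zero_re] at hre
  have hsq_re : (z^2).re = z.re * z.re - z.im * z.im := by
    rw [sq, Complex.mul_re]
  have hnormsq : z.re * z.re + z.im * z.im = 1 := by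
    have := Complex.normSq_eq_norm_sq z
    rw [habs] at this
    rw [show z.re * z.re + z.im * z.im = Complex.normSq z from (Complex.normSq_apply z).symm, this]
    norm_num
  have hlt2 : (z.re - 1) * (z.re - 1) + z.im * z.im < 1 := by
    have h1 : ‖z - 1‖ < 1 := hlt
    have h2 : Complex.normSq (z - 1) < 1 := by
      rw [Complex.normSq_eq_norm_sq]
      nlinarith [norm_nonneg (z - 1)]
    rw [Complex.normSq_apply] at h2
    simpa using h2
  rw [hsq_re] at hre
  nlinarith [hre, hnormsq, hlt2]

lemma cf_continuous (ρ : Measure ℝ) [IsProbabilityMeasure ρ] : Continuous (cf ρ) := by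
  apply continuous_of_dominated (bound := fun _ => (1:ℝ))
  · exact fun t => (continuous_cexp_I t).aestronglyMeasurable
  · exact fun t => ae_of_all _ (fun x => le_of_eq (norm_cexp_I t x))
  · exact integrable_const 1
  · apply ae_of_all
    intro x
    apply Complex.continuous_exp.comp
    exact (Complex.continuous_ofReal.mul continuous_const).mul continuous_const

/-- The exponent appearing in the characteristic function of `muZ`. -/
noncomputable def Fe (t : ℝ) : ℂ :=
  2 * (Complex.exp (t * 1 * Complex.I) - 1)
    + 2 * (Complex.exp (t * 2 * Complex.I) - 1)
    - (Complex.exp (t * 3 * Complex.I) - 1)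
    + 2 * (Complex.exp (t * 4 * Complex.I) - 1)
    + 2 * (Complex.exp (t * 5 * Complex.I) - 1)

lemma cf_muZ_Fe (t : ℝ) : cf muZ t = Complex.exp (Fe t) := cf_muZ' t

lemma Fe_continuous : Continuous Fe := by
  have hc : ∀ c : ℂ, Continuous (fun t : ℝ => Complex.exp (t * c * Complex.I)) := by
    intro c
    apply Complex.continuous_exp.comp
    exact (Complex.continuous_ofReal.mul continuous_const).mul continuous_const
  unfold Fe
  apply Continuous.add
  apply Continuous.add
  apply Continuous.sub
  apply Continuous.add
  all_goals
    first
      | exact (continuous_const.mul ((hc _).sub continuous_const))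
      | exact ((hc _).sub continuous_const)

lemma Fe_zero : Fe 0 = 0 := by
  simp [Fe]

lemma cf_zero (ρ : Measure ℝ) [IsProbabilityMeasure ρ] : cf ρ 0 = 1 := by
  rw [cf]
  have : ∀ x : ℝ, Complex.exp ((0:ℝ) * x * Complex.I) = 1 := by
    intro x
    norm_num
  rw [integral_congr_ae (ae_of_all _ this), integral_const, probReal_univ]
  simp

/-- Extraction of the continuous fifth root. -/
lemma cf_eq_exp_Fe_div5 (ρ : Measure ℝ) [IsProbabilityMeasure ρ]
    (h5 : ∀ t, (cf ρ t) ^ 5 = Complex.exp (Fe t)) :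
    ∀ t, cf ρ t = Complex.exp (Fe t / 5) := by
  set h : ℝ → ℂ := fun t => cf ρ t * Complex.exp (-(Fe t / 5)) with hh
  have hcont : Continuous h := by
    exact (cf_continuous ρ).mul (Complex.continuous_exp.comp ((Fe_continuous.div_const 5).neg))
  have hpow : ∀ t, (h t) ^ 5 = 1 := by
    intro t
    have hexp : (Complex.exp (-(Fe t / 5))) ^ 5 = Complex.exp (-(Fe t)) := by
      rw [← Complex.exp_nat_mul]
      congr 1
      push_cast
      ring
    rw [hh]
    simp only []
    rw [mul_pow, hexp, h5 t, ← Complex.exp_add]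
    simp
  have h0 : h 0 = 1 := by
    rw [hh]
    simp only []
    rw [cf_zero, Fe_zero]
    simp
  have hS : {t : ℝ | h t = 1} = Set.univ := by
    have hclosed : IsClosed {t : ℝ | h t = 1} := isClosed_eq hcont continuous_const
    have hopen : IsOpen {t : ℝ | h t = 1} := by
      have heq : {t : ℝ | h t = 1} = h ⁻¹' (Metric.ball 1 1) := by
        ext t
        simp only [Set.mem_setOf_eq, Set.mem_preimage, Metric.mem_ball, dist_eq_norm]
        constructor
        · intro ht; rw [ht]; simpa using one_pos
        · intro ht; exact root5 (hpow t) ht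
      rw [heq]
      exact Metric.isOpen_ball.preimage hcont
    rcases isClopen_iff.1 ⟨hclosed, hopen⟩ with hemp | huniv
    · exfalso
      have h0' : (0:ℝ) ∈ {t : ℝ | h t = 1} := h0
      rw [hemp] at h0'
      exact h0'
    · exact huniv
  intro t
  have ht : h t = 1 := by
    have : t ∈ {t : ℝ | h t = 1} := by rw [hS]; trivial
    exact this
  have := congrArg (· * Complex.exp (Fe t / 5)) ht
  simp only [one_mul] at this
  rw [mul_assoc, ← Complex.exp_add] at this
  simpa using this

/-- The coefficients of the fifth root. -/
noncomputable def dd (m : ℕ) : ℝ := Real.exp (-(7/5)) * pr (1/5) m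

lemma summable_dd_abs : Summable (fun m => |dd m|) := by
  apply Summable.of_nonneg_of_le (fun m => abs_nonneg _) _
    ((summable_pr_abs (1/5) (by norm_num)).mul_left (Real.exp (-(7/5))))
  intro m
  rw [dd, abs_mul, _root_.abs_of_nonneg (Real.exp_nonneg _)]
  exact mul_le_mul_of_nonneg_left (abs_pr_le (1/5) (by norm_num) m) (Real.exp_nonneg _)

lemma dd_3_neg : dd 3 < 0 := by
  have hp : pr (1/5) 3 = -(11/375) := by
    rw [pr, ← (summable_slice (1/5) (by norm_num) 3).sum_add_tsum_nat_add 4]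
    have htail : ∑' j : ℕ, aco 3 (j + 4) * (1/5:ℝ) ^ (j + 4) / (j + 4)! = 0 := by
      have hz : ∀ j : ℕ, aco 3 (j + 4) * (1/5:ℝ) ^ (j + 4) / (j + 4)! = 0 := by
        intro j
        rw [aco_eq_zero_of_lt (by omega)]
        simp
      rw [tsum_congr hz, tsum_zero]
    rw [htail, add_zero]
    rw [Finset.sum_range_succ, Finset.sum_range_succ, Finset.sum_range_succ,
      Finset.sum_range_one, aco_zero, aco_one, qq_coeff, aco_3_2, aco_3_3]
    norm_num [Nat.factorial]
  rw [dd, hp]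
  have := Real.exp_pos (-(7/5))
  nlinarith

/-- Series representation of the fifth root. -/
lemma exp_Fe_div5_series (t : ℝ) :
    Complex.exp (Fe t / 5) = ∑' m : ℕ, (dd m : ℂ) * Complex.exp (t * I) ^ m := by
  have hFe : Fe t = Pw (Complex.exp (t * I)) - 7 := by
    have h1 := cf_muZ t
    have h2 := cf_muZ_Fe t
    -- both are values of exp; instead prove directly as in cf_muZ'
    have e : ∀ n : ℕ, Complex.exp ((t:ℂ) * (n:ℂ) * I) = Complex.exp ((t:ℂ) * I) ^ n := by
      intro n
      rw [show ((t:ℂ) * (n:ℂ) * I) = (n:ℂ) * ((t:ℂ) * I) by ring, Complex.exp_nat_mul]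
    have e1 : Complex.exp ((t:ℂ) * 1 * I) = Complex.exp ((t:ℂ) * I) ^ 1 := by simpa using e 1
    have e2 : Complex.exp ((t:ℂ) * 2 * I) = Complex.exp ((t:ℂ) * I) ^ 2 := by simpa using e 2
    have e3 : Complex.exp ((t:ℂ) * 3 * I) = Complex.exp ((t:ℂ) * I) ^ 3 := by simpa using e 3
    have e4 : Complex.exp ((t:ℂ) * 4 * I) = Complex.exp ((t:ℂ) * I) ^ 4 := by simpa using e 4
    have e5 : Complex.exp ((t:ℂ) * 5 * I) = Complex.exp ((t:ℂ) * I) ^ 5 := by simpa using e 5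
    rw [Fe, e1, e2, e3, e4, e5, Pw]
    ring
  rw [hFe]
  have hsplit : Complex.exp ((Pw (Complex.exp (t * I)) - 7) / 5)
      = (Real.exp (-(7/5)) : ℂ) * Complex.exp ((1/5 : ℝ) * Pw (Complex.exp (t * I))) := by
    rw [Complex.ofReal_exp, ← Complex.exp_add]
    congr 1
    push_cast
    ring
  rw [hsplit, ← tsum_pr_eq_exp (1/5) (by norm_num) _ (le_of_eq (norm_cexp_tI t)), ← tsum_mul_left]
  apply tsum_congr
  intro m
  rw [dd]
  push_cast
  ring

/-! ### The double-integral (Fourier coefficient) argument -/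

/-- Normalized Lebesgue measure on `(0, 2π]`. -/
noncomputable def P2 : Measure ℝ := volume.restrict (Set.Ioc (0:ℝ) (2*Real.pi))

instance P2_finite : IsFiniteMeasure P2 := by
  constructor
  rw [P2, Measure.restrict_apply_univ]
  exact measure_Ioc_lt_top

/-- `K a = ∫_0^{2π} e^{ias} ds`. -/
noncomputable def K (a : ℝ) : ℂ := ∫ s, Complex.exp (a * s * I) ∂P2

lemma P2_univ : P2 Set.univ = ENNReal.ofReal (2*Real.pi) := by
  rw [P2, Measure.restrict_apply_univ, Real.volume_Ioc]
  norm_num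

lemma K_zero : K 0 = (2*Real.pi : ℝ) := by
  rw [K]
  have h1 : ∀ s : ℝ, Complex.exp ((0:ℝ) * s * I) = 1 := by intro s; norm_num
  rw [integral_congr_ae (ae_of_all _ h1), integral_const, measureReal_def, P2_univ,
    ENNReal.toReal_ofReal (by positivity)]
  simp [Complex.real_smul]

lemma K_neg (a : ℝ) : K (-a) = (starRingEnd ℂ) (K a) := by
  rw [K, K, ← integral_conj]
  apply integral_congr_ae (ae_of_all _ _)
  intro s
  rw [← Complex.exp_conj]
  congr 1
  simp only [map_mul, Complex.conj_I, Complex.conj_ofReal, Complex.ofReal_neg]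
  ring

lemma K_of_period {a : ℝ} (ha : a ≠ 0) (hper : Complex.exp (a * (2*Real.pi) * I) = 1) :
    K a = 0 := by
  have hle : (0:ℝ) ≤ 2*Real.pi := by positivity
  have hK : K a = ∫ x in (0:ℝ)..(2*Real.pi), Complex.exp (((a:ℂ) * I) * x) := by
    rw [K, intervalIntegral.integral_of_le hle]
    apply integral_congr_ae (ae_of_all _ _)
    intro s
    congr 1
    ring
  rw [hK, integral_exp_mul_complex (mul_ne_zero (Complex.ofReal_ne_zero.2 ha) Complex.I_ne_zero)]
  have h2 : ((a:ℂ) * I) * ((2*Real.pi : ℝ) : ℂ) = (a : ℂ) * ((2*Real.pi : ℝ) : ℂ) * I := by ring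
  rw [h2]
  have h3 : Complex.exp ((a:ℂ) * ((2*Real.pi:ℝ):ℂ) * I) = 1 := by
    have := hper
    push_cast at this ⊢
    convert this using 2
  rw [h3]
  norm_num

lemma K_nat_sub_three {m : ℕ} (hm : m ≠ 3) : K ((m:ℝ) - 3) = 0 := by
  apply K_of_period
  · intro hcontra
    have : (m:ℝ) = 3 := by linarith [sub_eq_zero.1 hcontra]
    exact hm (by exact_mod_cast this)
  · convert Complex.exp_int_mul_two_pi_mul_I ((m:ℤ) - 3) using 2
    push_cast
    ring

lemma norm_K_le (a : ℝ) : ‖K a‖ ≤ 2*Real.pi := by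
  rw [K]
  calc ‖∫ s, Complex.exp (a * s * I) ∂P2‖ ≤ ∫ s, ‖Complex.exp (a * s * I)‖ ∂P2 :=
        norm_integral_le_integral_norm _
    _ = ∫ _, (1:ℝ) ∂P2 := by
        apply integral_congr_ae (ae_of_all _ _)
        intro s
        rw [norm_cexp_I]
    _ ≤ 2*Real.pi := by
        rw [integral_const, measureReal_def, P2_univ, ENNReal.toReal_ofReal (by positivity)]
        simp

lemma integrable_of_bounded_gen {α : Type*} [MeasurableSpace α] {μ : Measure α}
    [IsFiniteMeasure μ] {f : α → ℂ} (C : ℝ) (hm : AEStronglyMeasurable f μ)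
    (hb : ∀ x, ‖f x‖ ≤ C) : Integrable f μ :=
  Integrable.mono' (integrable_const C) hm (ae_of_all _ hb)

/-- product measure on the square. -/
noncomputable def PP : Measure (ℝ × ℝ) := P2.prod P2

instance PP_finite : IsFiniteMeasure PP := by
  rw [PP]; infer_instance

/-- Series-side integrand. -/
noncomputable def gm (m : ℕ) (p : ℝ × ℝ) : ℂ :=
  (dd m : ℂ) * (Complex.exp ((((m:ℝ) - 3 : ℝ) : ℂ) * (p.1 : ℂ) * I)
    * Complex.exp (((-((m:ℝ) - 3) : ℝ) : ℂ) * (p.2 : ℂ) * I))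

/-- Measure-side integrand. -/
noncomputable def HH (p : ℝ × ℝ) (x : ℝ) : ℂ :=
  Complex.exp (((-3:ℝ) : ℂ) * ((p.1 - p.2 : ℝ) : ℂ) * I)
    * Complex.exp (((p.1 - p.2 : ℝ) : ℂ) * (x : ℂ) * I)

lemma gm_continuous (m : ℕ) : Continuous (gm m) := by
  unfold gm
  apply continuous_const.mul
  apply Continuous.mul
  · exact (continuous_cexp_I ((m:ℝ) - 3)).comp continuous_fst
  · exact (continuous_cexp_I (-((m:ℝ) - 3))).comp continuous_snd

lemma gm_norm (m : ℕ) (p : ℝ × ℝ) : ‖gm m p‖ = |dd m| := by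
  unfold gm
  rw [norm_mul, norm_mul, norm_cexp_I, norm_cexp_I]
  simp [Complex.norm_real]

lemma gm_integral (m : ℕ) : ∫ p, gm m p ∂PP
    = (dd m : ℂ) * (K ((m:ℝ) - 3) * K (-((m:ℝ) - 3))) := by
  calc ∫ p, gm m p ∂PP
      = (dd m : ℂ) * ∫ p : ℝ × ℝ, (Complex.exp ((((m:ℝ) - 3 : ℝ) : ℂ) * (p.1 : ℂ) * I)
          * Complex.exp (((-((m:ℝ) - 3) : ℝ) : ℂ) * (p.2 : ℂ) * I)) ∂PP :=
        integral_const_mul _ _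
    _ = (dd m : ℂ) * (K ((m:ℝ) - 3) * K (-((m:ℝ) - 3))) := by
        congr 1
        rw [PP]
        exact integral_prod_mul (fun s : ℝ => Complex.exp ((((m:ℝ) - 3 : ℝ) : ℂ) * (s : ℂ) * I))
          (fun u : ℝ => Complex.exp (((-((m:ℝ) - 3) : ℝ) : ℂ) * (u : ℂ) * I))

lemma HH_continuous : Continuous (Function.uncurry HH) := by
  unfold HH Function.uncurry
  apply Continuous.mul
  · exact (continuous_cexp_I (-3)).comp (continuous_fst.fst.sub continuous_fst.snd)
  · apply Complex.continuous_exp.comp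
    apply Continuous.mul _ continuous_const
    apply Continuous.mul
    · exact Complex.continuous_ofReal.comp (continuous_fst.fst.sub continuous_fst.snd)
    · exact Complex.continuous_ofReal.comp continuous_snd

lemma HH_norm (p : ℝ × ℝ) (x : ℝ) : ‖HH p x‖ = 1 := by
  unfold HH
  rw [norm_mul, norm_cexp_I, norm_cexp_I]
  norm_num

lemma HH_inner (x : ℝ) : ∫ p, HH p x ∂PP = ((Complex.normSq (K (x - 3)) : ℝ) : ℂ) := by
  have hsplit : ∀ p : ℝ × ℝ, HH p x
      = Complex.exp (((x - 3 : ℝ) : ℂ) * (p.1 : ℂ) * I)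
        * Complex.exp (((-(x - 3) : ℝ) : ℂ) * (p.2 : ℂ) * I) := by
    rintro ⟨s, u⟩
    unfold HH
    rw [← Complex.exp_add, ← Complex.exp_add]
    congr 1
    push_cast
    ring
  rw [integral_congr_ae (ae_of_all _ hsplit), PP]
  rw [integral_prod_mul (fun s : ℝ => Complex.exp (((x - 3 : ℝ) : ℂ) * (s : ℂ) * I))
    (fun u : ℝ => Complex.exp (((-(x - 3) : ℝ) : ℂ) * (u : ℂ) * I))]
  have h1 : (∫ u, Complex.exp (((-(x - 3) : ℝ) : ℂ) * (u : ℂ) * I) ∂P2) = K (-(x-3)) := rfl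
  have h2 : (∫ s, Complex.exp (((x - 3 : ℝ) : ℂ) * (s : ℂ) * I) ∂P2) = K (x-3) := rfl
  rw [h1, h2, K_neg, Complex.mul_conj]

lemma not_infDivisible : ¬ InfDivisible muZ := by
  intro hID
  obtain ⟨ρ, hρ, hρ5⟩ := hID 5 (by norm_num)
  haveI := hρ
  have h5 : ∀ t, (cf ρ t) ^ 5 = Complex.exp (Fe t) := by
    intro t
    rw [← cf_convPow ρ 5 t, hρ5, cf_muZ_Fe]
  have hG : ∀ t, cf ρ t = Complex.exp (Fe t / 5) := cf_eq_exp_Fe_div5 ρ h5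
  have hGseries : ∀ t : ℝ, cf ρ t = ∑' m : ℕ, (dd m : ℂ) * Complex.exp (t * I) ^ m := by
    intro t
    rw [hG t, exp_Fe_div5_series t]
  -- pointwise series representation of the integrand
  have hptwise : ∀ p : ℝ × ℝ,
      Complex.exp (((-3:ℝ) : ℂ) * ((p.1 - p.2 : ℝ) : ℂ) * I) * cf ρ (p.1 - p.2) = ∑' m : ℕ, gm m p := by
    rintro ⟨s, u⟩
    simp only []
    rw [hGseries (s - u), ← tsum_mul_left]
    apply tsum_congr
    intro m
    unfold gm
    have key : ∀ (c z w : ℂ), Complex.exp z * (c * Complex.exp w)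
        = c * Complex.exp (z + w) := by
      intro c z w; rw [Complex.exp_add]; ring
    have hexp : Complex.exp ((s - u : ℝ) * I) ^ m = Complex.exp ((m:ℂ) * ((s-u:ℝ) * I)) := by
      rw [Complex.exp_nat_mul]
    rw [hexp, key, ← Complex.exp_add]
    congr 2
    push_cast
    ring
  -- series side
  have hlint : ∑' m : ℕ, ∫⁻ p, ‖gm m p‖₊ ∂PP ≠ ⊤ := by
    have hconst : ∀ m : ℕ, ∫⁻ p, (‖gm m p‖₊ : ℝ≥0∞) ∂PP = (‖dd m‖₊ : ℝ≥0∞) * PP Set.univ := by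
      intro m
      have hpt : ∀ p : ℝ × ℝ, (‖gm m p‖₊ : ℝ≥0∞) = (‖dd m‖₊ : ℝ≥0∞) := by
        intro p
        congr 1
        ext
        rw [coe_nnnorm, coe_nnnorm, gm_norm m p, Real.norm_eq_abs]
      rw [lintegral_congr hpt, lintegral_const]
    rw [tsum_congr hconst, ENNReal.tsum_mul_right]
    apply ENNReal.mul_ne_top
    · rw [ENNReal.tsum_coe_ne_top_iff_summable, ← NNReal.summable_coe]
      apply summable_dd_abs.congr
      intro m
      rw [coe_nnnorm, Real.norm_eq_abs]
    · exact (measure_lt_top PP Set.univ).ne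
  have hBseries : (∫ p, Complex.exp (((-3:ℝ) : ℂ) * ((p.1 - p.2 : ℝ) : ℂ) * I) * cf ρ (p.1 - p.2) ∂PP)
      = ∑' m : ℕ, ∫ p, gm m p ∂PP := by
    rw [integral_congr_ae (ae_of_all _ hptwise)]
    exact integral_tsum (fun m => (gm_continuous m).aestronglyMeasurable) hlint
  have hcollapse : ∑' m : ℕ, ∫ p, gm m p ∂PP = (dd 3 : ℂ) * (2*Real.pi:ℝ)^2 := by
    have hzero : ∀ m : ℕ, m ≠ 3 → ∫ p, gm m p ∂PP = 0 := by
      intro m hm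
      rw [gm_integral m, K_nat_sub_three hm]
      ring
    rw [tsum_eq_single 3 hzero, gm_integral 3]
    have h0 : ((3:ℕ):ℝ) - 3 = 0 := by norm_num
    rw [h0, neg_zero, K_zero]
    push_cast
    ring
  -- measure side
  have hGrho : ∀ p : ℝ × ℝ,
      Complex.exp (((-3:ℝ) : ℂ) * ((p.1 - p.2 : ℝ) : ℂ) * I) * cf ρ (p.1 - p.2) = ∫ x, HH p x ∂ρ := by
    intro p
    rw [cf]
    unfold HH
    exact (integral_const_mul _ _).symm
  have hHint : Integrable (Function.uncurry HH) (PP.prod ρ) := by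
    apply integrable_of_bounded_gen 1 HH_continuous.aestronglyMeasurable
    rintro ⟨p, x⟩
    rw [Function.uncurry, HH_norm]
  have hswap : (∫ p, Complex.exp (((-3:ℝ) : ℂ) * ((p.1 - p.2 : ℝ) : ℂ) * I) * cf ρ (p.1 - p.2) ∂PP)
      = ∫ x, ∫ p, HH p x ∂PP ∂ρ := by
    rw [integral_congr_ae (ae_of_all _ hGrho)]
    exact integral_integral_swap hHint
  have hfinal : (∫ p, Complex.exp (((-3:ℝ) : ℂ) * ((p.1 - p.2 : ℝ) : ℂ) * I) * cf ρ (p.1 - p.2) ∂PP)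
      = ((∫ x, Complex.normSq (K (x - 3)) ∂ρ : ℝ) : ℂ) := by
    rw [hswap, integral_congr_ae (ae_of_all _ (fun x => HH_inner x))]
    exact integral_ofReal
  have hRnonneg : 0 ≤ ∫ x, Complex.normSq (K (x - 3)) ∂ρ :=
    integral_nonneg (fun x => Complex.normSq_nonneg _)
  have hcombine : ((dd 3 * (2*Real.pi)^2 : ℝ) : ℂ)
      = ((∫ x, Complex.normSq (K (x - 3)) ∂ρ : ℝ) : ℂ) := by
    rw [← hfinal, hBseries, hcollapse]
    push_cast
    ring
  have heq : dd 3 * (2*Real.pi)^2 = ∫ x, Complex.normSq (K (x - 3)) ∂ρ :=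
    Complex.ofReal_inj.1 hcombine
  have hd3 := dd_3_neg
  have h2 : (0:ℝ) < (2*Real.pi)^2 := by positivity
  have h3 : dd 3 * (2*Real.pi)^2 < 0 := mul_neg_of_neg_of_pos hd3 h2
  linarith [heq, hRnonneg, h3]

end Rosinski

/-- Rosiński's example: there is a non-negative integer-valued random variable
`Z` with characteristic function `exp(∫(e^{itx}−1)dν)`,
`ν = 2δ₁ + 2δ₂ − δ₃ + 2δ₄ + 2δ₅`, which is not infinitely divisible, yet the
sum of `Z` with an independent compound Poisson variable with Lévy measure `δ₃`
is compound Poisson with Lévy measure `2δ₁ + 2δ₂ + 2δ₄ + 2δ₅`. -/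
theorem rosinski_counterexample :
    ∃ μZ : Measure ℝ, IsProbabilityMeasure μZ
      ∧ μZ (Set.range ((↑·) : ℕ → ℝ))ᶜ = 0
      ∧ (∀ t : ℝ, cf μZ t = Complex.exp
          (2 * (Complex.exp (t * 1 * Complex.I) - 1)
            + 2 * (Complex.exp (t * 2 * Complex.I) - 1)
            - (Complex.exp (t * 3 * Complex.I) - 1)
            + 2 * (Complex.exp (t * 4 * Complex.I) - 1)
            + 2 * (Complex.exp (t * 5 * Complex.I) - 1)))
      ∧ ¬ InfDivisible μZ
      ∧ ∀ μX : Measure ℝ, IsCompoundPoisson μX (Measure.dirac 3) →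
          IsCompoundPoisson (mconv μZ μX)
            ((2 : ℝ≥0∞) • Measure.dirac 1 + (2 : ℝ≥0∞) • Measure.dirac 2
              + (2 : ℝ≥0∞) • Measure.dirac 4 + (2 : ℝ≥0∞) • Measure.dirac 5) := by
  refine ⟨Rosinski.muZ, Rosinski.muZ_prob, Rosinski.muZ_support, Rosinski.cf_muZ',
    Rosinski.not_infDivisible, Rosinski.final_clause⟩
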